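/- In the Cuntz algebra O₃ with generators S₁,S₂,S₃ and the derivations ∂ⱼ determined by the SO(3) action, one has S₁*∂ⱼ(S₁) = 0 for all j = 1,2,3, while Σⱼ ∂ⱼ(S₁*)∂ⱼ(S₁) = 2·1. Consequently the universal one-form ω = S₁*δS₁ satisfies Π(ω) = 0 but Π(δω) = 2 ⊗ 𝕀 ≠ 0, so δω is a nonzero junk form. -/
import Mathlib


/-- In the Cuntz algebra `O₃` with the derivations `∂ⱼ` coming from the
`SO(3)`-action, one has `S₁*∂ⱼ(S₁) = 0` for all `j` while
`Σⱼ ∂ⱼ(S₁*)∂ⱼ(S₁) = 2·1`; hence the one-form `ω = S₁*δS₁` satisfies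
`Π(ω) = 0` but `Π(δω) = 2 ⊗ 𝕀 ≠ 0`, a nonzero junk form. -/
theorem junk_form_identities
    {A : Type*} [Ring A] [StarRing A]
    (S : Fin 3 → A)
    (hiso : ∀ i, star (S i) * S i = 1)
    (hsum : ∑ j, S j * star (S j) = 1)
    (horth : ∀ i j, i ≠ j → star (S i) * S j = 0)
    (d : Fin 3 → A →+ A)
    (hstar : ∀ j a, d j (star a) = star (d j a))
    (h1 : d 0 (S 0) = 0) (h2 : d 1 (S 0) = -S 2) (h3 : d 2 (S 0) = S 1) :
    (∀ j, star (S 0) * d j (S 0) = 0) ∧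
    (∑ j, d j (star (S 0)) * d j (S 0) = 2) := by
  constructor
  · intro j
    fin_cases j
    · simp [h1]
    · show star (S 0) * d 1 (S 0) = 0
      rw [h2, mul_neg, horth 0 2 (by decide), neg_zero]
    · show star (S 0) * d 2 (S 0) = 0
      rw [h3, horth 0 1 (by decide)]
  · rw [Fin.sum_univ_three, hstar, hstar, hstar, h1, h2, h3, hiso]
    simp [star_neg, hiso 2]
    norm_num
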